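/- Let φ: A → B be a surjective homomorphism of abelian groups, 𝔞 an A-graded Lie superalgebra, 𝔤 a B-graded Lie superalgebra, ψ: 𝔞 → 𝔤 a B-graded Lie superalgebra homomorphism (where 𝔞 is B-graded via φ), and (𝔭, Π') a φ-covering of 𝔤. Then there exists a unique A-graded Lie superalgebra homomorphism Ψ: 𝔞 → 𝔭 with Π' ∘ Ψ = ψ. -/

import Mathlib

set_option linter.unnecessarySimpa false


/-- The sign `(-1)^{ij}` for parities `i j : ℤ₂`, as an element of `K`. -/
def ssign (K : Type*) [Field K] (i j : ZMod 2) : K := if i = 1 ∧ j = 1 then -1 else 1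

/-- An `A`-graded Lie superalgebra over `K`, where `A` is an abelian group and the
parities are governed by a group homomorphism `δ : A → ℤ₂`: a grading `p` of the
carrier `L` by submodules whose internal direct sum is `L`, and a bilinear bracket `br`
with `[p a, p b] ⊆ p (a+b)`, super skew-symmetry and the super Jacobi identity
(signs `(-1)^{δ(a)δ(b)}`). -/
structure IsGradedLieSuperAlg (K : Type*) [Field K] {A : Type*} [AddCommGroup A]
    [DecidableEq A] {L : Type*} [AddCommGroup L] [Module K L]
    (δ : A →+ ZMod 2) (p : A → Submodule K L) (br : L → L → L) : Prop where
  add_left : ∀ x x' y, br (x + x') y = br x y + br x' y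
  smul_left : ∀ (c : K) x y, br (c • x) y = c • br x y
  add_right : ∀ x y y', br x (y + y') = br x y + br x y'
  smul_right : ∀ (c : K) x y, br x (c • y) = c • br x y
  internal : DirectSum.IsInternal p
  grade : ∀ a b, ∀ x ∈ p a, ∀ y ∈ p b, br x y ∈ p (a + b)
  skew : ∀ a b, ∀ x ∈ p a, ∀ y ∈ p b, br x y = - ssign K (δ a) (δ b) • br y x
  jacobi : ∀ a b, ∀ x ∈ p a, ∀ y ∈ p b, ∀ z,
    br x (br y z) - ssign K (δ a) (δ b) • br y (br x z) = br (br x y) z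

structure IsCovering (K : Type*) [Field K] {A B : Type*} [AddCommGroup A] [AddCommGroup B]
    {P G : Type*} [AddCommGroup P] [Module K P] [AddCommGroup G] [Module K G]
    (φ : A →+ B) (p : A → Submodule K P) (brp : P → P → P)
    (q : B → Submodule K G) (brg : G → G → G) (prj : P →ₗ[K] G) : Prop where
  hom : ∀ x y, prj (brp x y) = brg (prj x) (prj y)
  maps : ∀ a, ∀ x ∈ p a, prj x ∈ q (φ a)
  inj : ∀ a, ∀ x ∈ p a, prj x = 0 → x = 0
  surj : ∀ a, ∀ y ∈ q (φ a), ∃ x ∈ p a, prj x = y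

namespace Stmt12

/-- Let `φ : A → B` be a surjective homomorphism of abelian groups,
`𝔞` an `A`-graded Lie superalgebra, `𝔤` a `B`-graded Lie superalgebra,
`ψ : 𝔞 → 𝔤` a `B`-graded Lie superalgebra homomorphism (where `𝔞` is `B`-graded via `φ`),
and `(𝔭, Π')` a `φ`-covering of `𝔤`.  Then there exists a unique `A`-graded Lie
superalgebra homomorphism `Ψ : 𝔞 → 𝔭` with `Π' ∘ Ψ = ψ`. -/
theorem covering_universal_property
    {K : Type*} [Field K] {A B : Type*} [AddCommGroup A] [AddCommGroup B]
    [DecidableEq A] [DecidableEq B]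
    {P G La : Type*} [AddCommGroup P] [Module K P] [AddCommGroup G] [Module K G]
    [AddCommGroup La] [Module K La]
    (δ : B →+ ZMod 2) (φ : A →+ B) (hφ : Function.Surjective φ)
    (q : B → Submodule K G) (brg : G → G → G)
    (hg : IsGradedLieSuperAlg K δ q brg)
    (p : A → Submodule K P) (brp : P → P → P)
    (hp : IsGradedLieSuperAlg K (δ.comp φ) p brp)
    (prj : P →ₗ[K] G)
    (hcov : IsCovering K φ p brp q brg prj)
    (pa : A → Submodule K La) (bra : La → La → La)
    (ha : IsGradedLieSuperAlg K (δ.comp φ) pa bra)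
    (ψ : La →ₗ[K] G)
    (hψhom : ∀ x y, ψ (bra x y) = brg (ψ x) (ψ y))
    (hψgr : ∀ a : A, ∀ x ∈ pa a, ψ x ∈ q (φ a)) :
    ∃! Ψ : La →ₗ[K] P,
      (∀ a : A, ∀ x ∈ pa a, Ψ x ∈ p a) ∧
      (∀ x y, Ψ (bra x y) = brp (Ψ x) (Ψ y)) ∧
      (∀ x, prj (Ψ x) = ψ x) := by
  classical
  -- `prj` gives a linear bijection from each `p a` onto `q (φ a)`.
  have hinj : ∀ a : A, ∀ u v : P, u ∈ p a → v ∈ p a → prj u = prj v → u = v := by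
    intro a u v hu hv h
    have h0 : prj (u - v) = 0 := by rw [map_sub, h, sub_self]
    have := hcov.inj a (u - v) (Submodule.sub_mem _ hu hv) h0
    exact sub_eq_zero.mp this
  set prjr : ∀ a : A, (p a →ₗ[K] q (φ a)) :=
    fun a => (prj.comp (p a).subtype).codRestrict (q (φ a))
      (fun x => hcov.maps a x.1 x.2) with hprjr
  have hbij : ∀ a, Function.Bijective (prjr a) := by
    intro a
    constructor
    · intro u v huv
      have : prj u.1 = prj v.1 := congrArg Subtype.val huv
      exact Subtype.ext (hinj a u.1 v.1 u.2 v.2 this)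
    · intro y
      obtain ⟨x, hx, hxy⟩ := hcov.surj a y.1 y.2
      exact ⟨⟨x, hx⟩, Subtype.ext hxy⟩
  set eqv : ∀ a : A, (p a ≃ₗ[K] q (φ a)) :=
    fun a => LinearEquiv.ofBijective (prjr a) (hbij a) with heqv
  -- the component maps
  set f : ∀ a : A, (pa a →ₗ[K] P) := fun a =>
    (p a).subtype ∘ₗ ((eqv a).symm.toLinearMap ∘ₗ
      ((ψ.comp (pa a).subtype).codRestrict (q (φ a)) (fun x => hψgr a x.1 x.2))) with hf
  have hfmem : ∀ a (x : pa a), f a x ∈ p a := fun a x => ((eqv a).symm _).2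
  have hfprj : ∀ a (x : pa a), prj (f a x) = ψ x.1 := by
    intro a x
    have : prjr a ((eqv a).symm ⟨ψ x.1, hψgr a x.1 x.2⟩) = ⟨ψ x.1, hψgr a x.1 x.2⟩ :=
      (eqv a).apply_symm_apply _
    exact congrArg Subtype.val this
  -- the decomposition equivalence
  set e : (DirectSum A fun a => pa a) ≃ₗ[K] La :=
    LinearEquiv.ofBijective (DirectSum.coeLinearMap pa) ha.internal with he
  set Ψ : La →ₗ[K] P := (DirectSum.toModule K A P f).comp e.symm.toLinearMap with hΨ
  have hkey : ∀ a : A, ∀ x (hx : x ∈ pa a), Ψ x = f a ⟨x, hx⟩ := by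
    intro a x hx
    have h1 : e (DirectSum.of (fun a => pa a) a ⟨x, hx⟩) = x := by
      exact DirectSum.coeLinearMap_of pa a ⟨x, hx⟩
    have h2 : e.symm x = DirectSum.of (fun a => pa a) a ⟨x, hx⟩ :=
      e.symm_apply_eq.mpr h1.symm
    simp [hΨ, h2, DirectSum.toModule_lof]
    rw [show DirectSum.of (fun a => (pa a : Type _)) a ⟨x, hx⟩
        = DirectSum.lof K A (fun a => pa a) a ⟨x, hx⟩ from rfl,
      DirectSum.toModule_lof]
  have hsup : (⨆ a : A, pa a) = ⊤ := ha.internal.submodule_iSup_eq_top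
  -- induction principle over graded pieces
  have hspan : ∀ (C : La → Prop), (∀ a : A, ∀ x ∈ pa a, C x) → C 0 →
      (∀ x y, C x → C y → C (x + y)) → ∀ x, C x := by
    intro C hmem h0 hadd x
    have hx : x ∈ (⊤ : Submodule K La) := trivial
    rw [← hsup] at hx
    exact Submodule.iSup_induction pa (motive := C) hx hmem h0 hadd
  -- Ψ is graded and lifts ψ
  have hgr : ∀ a : A, ∀ x ∈ pa a, Ψ x ∈ p a := by
    intro a x hx; rw [hkey a x hx]; exact hfmem a _
  have hlift : ∀ x, prj (Ψ x) = ψ x := by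
    refine hspan (fun x => prj (Ψ x) = ψ x) (fun a x hx => ?_) (by simp) ?_
    · show prj (Ψ x) = ψ x
      rw [hkey a x hx]; exact hfprj a ⟨x, hx⟩
    · intro x y hx hy; simp [map_add, hx, hy]
  -- Ψ is a bracket homomorphism
  have hbr : ∀ x y, Ψ (bra x y) = brp (Ψ x) (Ψ y) := by
    have key : ∀ a b : A, ∀ x ∈ pa a, ∀ y ∈ pa b,
        Ψ (bra x y) = brp (Ψ x) (Ψ y) := by
      intro a b x hx y hy
      have h1 : Ψ (bra x y) ∈ p (a + b) := hgr _ _ (ha.grade a b x hx y hy)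
      have h2 : brp (Ψ x) (Ψ y) ∈ p (a + b) :=
        hp.grade a b _ (hgr a x hx) _ (hgr b y hy)
      refine hinj (a + b) _ _ h1 h2 ?_
      rw [hlift, hcov.hom, hlift, hlift, hψhom]
    have hbr0l : ∀ y, brp 0 y = 0 := by
      intro y
      have := hp.add_left 0 0 y
      rw [add_zero] at this
      exact left_eq_add.mp this
    have hbr0r : ∀ x, brp x 0 = 0 := by
      intro x
      have := hp.add_right x 0 0
      rw [add_zero] at this
      exact left_eq_add.mp this
    have habr0l : ∀ y, bra 0 y = 0 := by
      intro y
      have := ha.add_left 0 0 y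
      rw [add_zero] at this
      exact left_eq_add.mp this
    have habr0r : ∀ x, bra x 0 = 0 := by
      intro x
      have := ha.add_right x 0 0
      rw [add_zero] at this
      exact left_eq_add.mp this
    -- first extend in the second variable, then in the first
    have step1 : ∀ a : A, ∀ x ∈ pa a, ∀ y, Ψ (bra x y) = brp (Ψ x) (Ψ y) := by
      intro a x hx
      refine hspan (fun y => Ψ (bra x y) = brp (Ψ x) (Ψ y)) (fun b y hy => key a b x hx y hy)
        (by simp only [habr0r, map_zero, hbr0r]) ?_
      intro y z hy hz
      simp only [ha.add_right, map_add, hy, hz, hp.add_right]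
    intro x y
    revert x
    refine hspan (fun x => Ψ (bra x y) = brp (Ψ x) (Ψ y)) (fun a x hx => step1 a x hx y)
      (by simp only [habr0l, map_zero, hbr0l]) ?_
    intro u v hu hv
    simp only [ha.add_left, map_add, hu, hv, hp.add_left]
  refine ⟨Ψ, ⟨hgr, hbr, hlift⟩, ?_⟩
  intro Ψ' ⟨hgr', _, hlift'⟩
  ext x
  revert x
  refine hspan (fun x => Ψ' x = Ψ x) (fun a x hx => ?_) (by simp) ?_
  · show Ψ' x = Ψ x
    exact hinj a _ _ (hgr' a x hx) (hgr a x hx) (by rw [hlift' x, hlift x])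
  · intro u v hu hv; simp only [map_add, hu, hv]

end Stmt12
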